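/- Stability constant of composed additive Schwarz bounds: Let a(·,·) be a symmetric positive definite bilinear form on a finite-dimensional space 𝔙 with subspaces 𝔙_i ⊆ 𝔙 (i = 0,…,N, with embeddings R_iᵀ) and SPD local forms ã_i. Suppose (i) every u ∈ 𝔙 admits a decomposition u = Σ_i R_iᵀ u_i with Σ_i ã_i(u_i,u_i) ≤ C₀ a(u,u), and (ii) for every decomposition u = Σ_i R_iᵀ v_i one has a(u,u) ≤ C₁ Σ_i ã_i(v_i,v_i). Then the additive Schwarz preconditioned operator B⁻¹A with B⁻¹ = Σ_i R_iᵀ Ã_i⁻¹ R_i satisfies λ_min(B⁻¹A) ≥ C₀⁻¹ and λ_max(B⁻¹A) ≤ C₁, hence κ(B⁻¹A) ≤ C₀C₁. -/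

import Mathlib

open Finset

/-- Cauchy–Schwarz for a symmetric positive (semi)definite bilinear form on a submodule. -/
lemma bilin_cauchy_schwarz
    {𝔙 : Type} [NormedAddCommGroup 𝔙] [InnerProductSpace ℝ 𝔙]
    (b : 𝔙 →ₗ[ℝ] 𝔙 →ₗ[ℝ] ℝ) (S : Submodule ℝ 𝔙)
    (hsymm : ∀ u ∈ S, ∀ v ∈ S, b u v = b v u)
    (hpos : ∀ v ∈ S, v ≠ 0 → 0 < b v v)
    {x y : 𝔙} (hx : x ∈ S) (hy : y ∈ S) :
    (b x y) ^ 2 ≤ b x x * b y y := by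
  have hnn : ∀ z ∈ S, 0 ≤ b z z := by
    intro z hz
    by_cases h : z = 0
    · simp [h]
    · exact (hpos z hz h).le
  by_cases hyy : y = 0
  · simp [hyy]
  · have hby : 0 < b y y := hpos y hy hyy
    set t : ℝ := b x y / b y y with ht
    have hmem : x - t • y ∈ S := S.sub_mem hx (S.smul_mem t hy)
    have hexp : b (x - t • y) (x - t • y)
        = b x x - t * b y x - t * b x y + t * t * b y y := by
      simp only [map_sub, map_smul, LinearMap.sub_apply, LinearMap.smul_apply,
        smul_eq_mul]
      ring
    have hyx : b y x = b x y := hsymm y hy x hx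
    have h0 : 0 ≤ b x x - t * b x y - t * b x y + t * t * b y y := by
      have := hnn _ hmem
      rw [hexp, hyx] at this
      linarith
    have ht' : t * b y y = b x y := by
      rw [ht, div_mul_cancel₀ _ hby.ne']
    nlinarith [h0, hby, mul_pos hby hby]

lemma bilin_cs_sqrt
    {𝔙 : Type} [NormedAddCommGroup 𝔙] [InnerProductSpace ℝ 𝔙]
    (b : 𝔙 →ₗ[ℝ] 𝔙 →ₗ[ℝ] ℝ) (S : Submodule ℝ 𝔙)
    (hsymm : ∀ u ∈ S, ∀ v ∈ S, b u v = b v u)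
    (hpos : ∀ v ∈ S, v ≠ 0 → 0 < b v v)
    {x y : 𝔙} (hx : x ∈ S) (hy : y ∈ S) :
    b x y ≤ Real.sqrt (b x x) * Real.sqrt (b y y) := by
  have hcs := bilin_cauchy_schwarz b S hsymm hpos hx hy
  have hnx : 0 ≤ b x x := by
    by_cases h : x = 0
    · simp [h]
    · exact (hpos x hx h).le
  calc b x y ≤ |b x y| := le_abs_self _
    _ = Real.sqrt ((b x y) ^ 2) := (Real.sqrt_sq_eq_abs _).symm
    _ ≤ Real.sqrt (b x x * b y y) := Real.sqrt_le_sqrt hcs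
    _ = Real.sqrt (b x x) * Real.sqrt (b y y) := Real.sqrt_mul hnx _

theorem additive_schwarz_condition_number
    (𝔙 : Type) [NormedAddCommGroup 𝔙] [InnerProductSpace ℝ 𝔙] [FiniteDimensional ℝ 𝔙]
    (N : ℕ) (a : 𝔙 →ₗ[ℝ] 𝔙 →ₗ[ℝ] ℝ)
    (hasymm : ∀ u v, a u v = a v u) (hapos : ∀ u, u ≠ 0 → 0 < a u u)
    (V : Fin (N + 1) → Submodule ℝ 𝔙)
    (atil : Fin (N + 1) → (𝔙 →ₗ[ℝ] 𝔙 →ₗ[ℝ] ℝ))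
    (htsymm : ∀ i, ∀ u ∈ V i, ∀ v ∈ V i, atil i u v = atil i v u)
    (htpos : ∀ i, ∀ v ∈ V i, v ≠ 0 → 0 < atil i v v)
    (C₀ C₁ : ℝ) (hC₀ : 0 < C₀) (hC₁ : 0 < C₁)
    -- (i) stable decomposition
    (hstable : ∀ u : 𝔙, ∃ us : Fin (N + 1) → 𝔙, (∀ i, us i ∈ V i) ∧
      u = ∑ i, us i ∧ ∑ i, atil i (us i) (us i) ≤ C₀ * a u u)
    -- (ii) bound for arbitrary decompositions
    (hbound : ∀ (u : 𝔙) (vs : Fin (N + 1) → 𝔙), (∀ i, vs i ∈ V i) → u = ∑ i, vs i →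
      a u u ≤ C₁ * ∑ i, atil i (vs i) (vs i))
    -- the local projections P_i, i.e. the components of B⁻¹A
    (P : Fin (N + 1) → 𝔙 → 𝔙)
    (hP : ∀ (i : Fin (N + 1)) (u : 𝔙), P i u ∈ V i ∧ ∀ v ∈ V i, atil i (P i u) v = a u v) :
    (∀ (μ : ℝ) (u : 𝔙), u ≠ 0 → (∑ i, P i u) = μ • u → C₀⁻¹ ≤ μ ∧ μ ≤ C₁) ∧
    (∀ (μ ν : ℝ) (u w : 𝔙), u ≠ 0 → w ≠ 0 →
      (∑ i, P i u) = μ • u → (∑ i, P i w) = ν • w → μ ≤ C₀ * C₁ * ν) := by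
  have main : ∀ (μ : ℝ) (u : 𝔙), u ≠ 0 → (∑ i, P i u) = μ • u → C₀⁻¹ ≤ μ ∧ μ ≤ C₁ := by
    intro μ u hu heig
    have hA : 0 < a u u := hapos u hu
    -- ∑ ã_i(P_i u, P_i u) = μ * a u u
    have hsumP : ∑ i, atil i (P i u) (P i u) = μ * a u u := by
      have h1 : ∀ i, atil i (P i u) (P i u) = a u (P i u) := fun i =>
        (hP i u).2 (P i u) (hP i u).1
      calc ∑ i, atil i (P i u) (P i u) = ∑ i, a u (P i u) := by
            exact Finset.sum_congr rfl fun i _ => h1 i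
        _ = a u (∑ i, P i u) := (map_sum (a u) _ _).symm
        _ = a u (μ • u) := by rw [heig]
        _ = μ * a u u := by rw [map_smul]; simp
    -- lower bound
    have hlow : C₀⁻¹ ≤ μ := by
      obtain ⟨us, hmem, hdec, hst⟩ := hstable u
      have hkey : a u u ≤ ∑ i, Real.sqrt (atil i (P i u) (P i u)) *
          Real.sqrt (atil i (us i) (us i)) := by
        calc a u u = a u (∑ i, us i) := by rw [← hdec]
          _ = ∑ i, a u (us i) := map_sum (a u) _ _
          _ = ∑ i, atil i (P i u) (us i) := by
              exact Finset.sum_congr rfl fun i _ => ((hP i u).2 (us i) (hmem i)).symm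
          _ ≤ _ := Finset.sum_le_sum fun i _ =>
              bilin_cs_sqrt (atil i) (V i) (htsymm i) (htpos i) (hP i u).1 (hmem i)
      have hnnP : ∀ i, 0 ≤ atil i (P i u) (P i u) := by
        intro i
        by_cases h : P i u = 0
        · simp [h]
        · exact (htpos i _ (hP i u).1 h).le
      have hnnu : ∀ i, 0 ≤ atil i (us i) (us i) := by
        intro i
        by_cases h : us i = 0
        · simp [h]
        · exact (htpos i _ (hmem i) h).le
      have hCS : ∑ i, Real.sqrt (atil i (P i u) (P i u)) * Real.sqrt (atil i (us i) (us i))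
          ≤ Real.sqrt (∑ i, atil i (P i u) (P i u)) * Real.sqrt (∑ i, atil i (us i) (us i)) :=
        Real.sum_sqrt_mul_sqrt_le _ hnnP hnnu
      have h2 : a u u ≤ Real.sqrt (μ * a u u) * Real.sqrt (C₀ * a u u) := by
        refine (hkey.trans hCS).trans ?_
        rw [hsumP]
        exact mul_le_mul_of_nonneg_left (Real.sqrt_le_sqrt hst) (Real.sqrt_nonneg _)
      have h3 : (a u u) ^ 2 ≤ μ * a u u * (C₀ * a u u) := by
        have hnnμ : 0 ≤ μ * a u u := by rw [← hsumP]; exact Finset.sum_nonneg fun i _ => hnnP i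
        have hnnC : 0 ≤ C₀ * a u u := by positivity
        calc (a u u) ^ 2 ≤ (Real.sqrt (μ * a u u) * Real.sqrt (C₀ * a u u)) ^ 2 := by
              have := h2
              nlinarith [hA]
          _ = μ * a u u * (C₀ * a u u) := by
              rw [mul_pow, Real.sq_sqrt hnnμ, Real.sq_sqrt hnnC]
      have h4 : 1 ≤ μ * C₀ := by nlinarith [h3, hA, mul_pos hA hA]
      rw [inv_le_iff_one_le_mul₀ hC₀]
      linarith [h4]
    -- upper bound
    have hμpos : 0 < μ := lt_of_lt_of_le (by positivity) hlow
    have hup : μ ≤ C₁ := by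
      have hb := hbound (μ • u) (fun i => P i u) (fun i => (hP i u).1) heig.symm
      have hlhs : a (μ • u) (μ • u) = μ * μ * a u u := by
        simp only [map_smul, LinearMap.smul_apply, smul_eq_mul]; ring
      rw [hlhs, hsumP] at hb
      have := mul_pos hμpos hA
      nlinarith
    exact ⟨hlow, hup⟩
  refine ⟨main, ?_⟩
  intro μ ν u w hu hw heu hew
  obtain ⟨_, hμup⟩ := main μ u hu heu
  obtain ⟨hνlow, _⟩ := main ν w hw hew
  have h1 : 1 ≤ C₀ * ν := by
    rw [inv_le_iff_one_le_mul₀ hC₀] at hνlow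
    linarith
  calc μ ≤ C₁ := hμup
    _ = C₁ * 1 := (mul_one _).symm
    _ ≤ C₁ * (C₀ * ν) := by
        exact mul_le_mul_of_nonneg_left h1 hC₁.le
    _ = C₀ * C₁ * ν := by ring
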